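/- Under the LOS error dynamics e'(t) = -U * e(t) / sqrt(Δ² + e(t)²) with U, Δ > 0, if |e(t)| ≤ M for all t ≥ 0 with M ≥ 0, then e(t)² ≤ e(0)² * exp(-2U t / sqrt(Δ² + M²)) for all t ≥ 0; in particular e(t) → 0 exponentially. -/

import Mathlib

/-- Under the LOS error dynamics with a uniform bound |e| ≤ M, the squared
cross-track error decays exponentially. -/
theorem los_sq_error_exp_decay (e : ℝ → ℝ) (U Δ M : ℝ)
    (hU : 0 < U) (hΔ : 0 < Δ) (hM : 0 ≤ M) (hdiff : Differentiable ℝ e)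
    (hode : ∀ t, deriv e t = -U * e t / Real.sqrt (Δ ^ 2 + (e t) ^ 2))
    (hbd : ∀ t, 0 ≤ t → |e t| ≤ M) :
    ∀ t, 0 ≤ t →
      (e t) ^ 2 ≤ (e 0) ^ 2 * Real.exp (-2 * U * t / Real.sqrt (Δ ^ 2 + M ^ 2)) := by
  intro t ht
  have hSpos : 0 < Real.sqrt (Δ ^ 2 + M ^ 2) := Real.sqrt_pos.2 (by positivity)
  set k : ℝ := 2 * U / Real.sqrt (Δ ^ 2 + M ^ 2) with hk
  have hkpos : 0 < k := by positivity
  set h : ℝ → ℝ := fun x => e x ^ 2 * Real.exp (k * x) with hh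
  have hderiv : ∀ x, HasDerivAt h
      ((2 * e x ^ 1 * deriv e x) * Real.exp (k * x)
        + e x ^ 2 * (Real.exp (k * x) * k)) x := by
    intro x
    have h1 : HasDerivAt (fun y => e y ^ 2) (2 * e x ^ 1 * deriv e x) x := by
      simpa using ((hdiff x).hasDerivAt.fun_pow 2)
    have h2 : HasDerivAt (fun y => Real.exp (k * y)) (Real.exp (k * x) * k) x := by
      simpa using (((hasDerivAt_id x).const_mul k).exp)
    exact h1.mul h2
  have hanti : AntitoneOn h (Set.Ici (0 : ℝ)) := by
    apply antitoneOn_of_deriv_nonpos (convex_Ici 0)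
    · exact (Continuous.mul (hdiff.continuous.pow 2) (by fun_prop)).continuousOn
    · intro x hx
      exact (hderiv x).differentiableAt.differentiableWithinAt
    · intro x hx
      rw [interior_Ici] at hx
      rw [(hderiv x).deriv, hode x]
      have hsx : 0 < Real.sqrt (Δ ^ 2 + e x ^ 2) := Real.sqrt_pos.2 (by positivity)
      have hble : Real.sqrt (Δ ^ 2 + e x ^ 2) ≤ Real.sqrt (Δ ^ 2 + M ^ 2) := by
        apply Real.sqrt_le_sqrt
        have := hbd x (le_of_lt hx)
        nlinarith [sq_abs (e x), abs_nonneg (e x)]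
      have hklt : k ≤ 2 * U / Real.sqrt (Δ ^ 2 + e x ^ 2) :=
        div_le_div_of_nonneg_left (by positivity) hsx hble
      have hexp : 0 < Real.exp (k * x) := Real.exp_pos _
      have key : 2 * e x ^ 1 * (-U * e x / Real.sqrt (Δ ^ 2 + e x ^ 2))
          + e x ^ 2 * k ≤ 0 := by
        have h1 : 2 * e x ^ 1 * (-U * e x / Real.sqrt (Δ ^ 2 + e x ^ 2))
            = -(e x ^ 2 * (2 * U / Real.sqrt (Δ ^ 2 + e x ^ 2))) := by
          field_simp
        rw [h1]
        have : e x ^ 2 * k ≤ e x ^ 2 * (2 * U / Real.sqrt (Δ ^ 2 + e x ^ 2)) :=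
          mul_le_mul_of_nonneg_left hklt (sq_nonneg _)
        linarith
      calc (2 * e x ^ 1 * (-U * e x / Real.sqrt (Δ ^ 2 + e x ^ 2))) * Real.exp (k * x)
            + e x ^ 2 * (Real.exp (k * x) * k)
          = (2 * e x ^ 1 * (-U * e x / Real.sqrt (Δ ^ 2 + e x ^ 2))
              + e x ^ 2 * k) * Real.exp (k * x) := by ring
        _ ≤ 0 := mul_nonpos_of_nonpos_of_nonneg key hexp.le
  have hmain : h t ≤ h 0 := hanti Set.self_mem_Ici ht ht
  have h0 : h 0 = e 0 ^ 2 := by simp [hh]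
  have hht : h t = e t ^ 2 * Real.exp (k * t) := rfl
  rw [hht, h0] at hmain
  have hepos : 0 < Real.exp (k * t) := Real.exp_pos _
  have : e t ^ 2 ≤ e 0 ^ 2 * Real.exp (-(k * t)) := by
    rw [Real.exp_neg, ← div_eq_mul_inv, le_div_iff₀ hepos]
    exact hmain
  have heq : -2 * U * t / Real.sqrt (Δ ^ 2 + M ^ 2) = -(k * t) := by
    rw [hk]; field_simp
  rw [heq]
  exact this
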